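/- Let f : (0,1] → [0,∞) be nondecreasing, 0 < δ < 1, α > 0, μ = δ^α. Then for every m ≥ 3, ∑_{i=1}^{m-2} f(δ^i)/μ^{i+1} ≤ (1/((1-δ) δ^{2α})) ∫_{δ^{m-1}}^1 f(r)/r^{1+α} dr. -/

import Mathlib

open Set MeasureTheory

theorem weighted_sum_le_integral (f : ℝ → ℝ) (δ α : ℝ) (hδ0 : 0 < δ) (hδ1 : δ < 1)
    (hα : 0 < α)
    (hnonneg : ∀ r ∈ Ioc (0 : ℝ) 1, 0 ≤ f r)
    (hmono : ∀ r ∈ Ioc (0 : ℝ) 1, ∀ s ∈ Ioc (0 : ℝ) 1, r ≤ s → f r ≤ f s)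
    (μ : ℝ) (hμ : μ = δ ^ α) :
    ∀ m : ℕ, 3 ≤ m →
      ∑ i ∈ Finset.Icc 1 (m - 2), f (δ ^ i) / μ ^ (i + 1) ≤
        (1 / ((1 - δ) * δ ^ (2 * α))) * ∫ r in Icc (δ ^ (m - 1)) 1, f r / r ^ (1 + α) := by
  intro m hm
  obtain ⟨k, rfl⟩ : ∃ k, m = k + 3 := ⟨m - 3, by omega⟩
  have hpow_pos : ∀ i : ℕ, (0:ℝ) < δ ^ i := fun i => pow_pos hδ0 i
  have hpow_le1 : ∀ i : ℕ, δ ^ i ≤ 1 := fun i => pow_le_one₀ hδ0.le hδ1.le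
  have hpow_mem : ∀ i : ℕ, δ ^ i ∈ Ioc (0:ℝ) 1 := fun i => ⟨hpow_pos i, hpow_le1 i⟩
  have hCpos : 0 < (1 - δ) * δ ^ (2 * α) :=
    mul_pos (by linarith) (Real.rpow_pos_of_pos hδ0 _)
  set C : ℝ := 1 / ((1 - δ) * δ ^ (2 * α)) with hC
  have hC0 : 0 ≤ C := le_of_lt (by positivity)
  -- integrability
  have hint : ∀ c d : ℝ, 0 < c → c ≤ d → d ≤ 1 →
      IntervalIntegrable (fun r => f r / r ^ (1 + α)) volume c d := by
    intro c d hc hcd hd1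
    rw [intervalIntegrable_iff_integrableOn_Icc_of_le hcd]
    have hsub : Icc c d ⊆ Ioc (0:ℝ) 1 := fun x hx =>
      ⟨lt_of_lt_of_le hc hx.1, le_trans hx.2 hd1⟩
    have hmf : MonotoneOn f (Icc c d) := fun x hx y hy hxy =>
      hmono x (hsub hx) y (hsub hy) hxy
    have hif : IntegrableOn f (Icc c d) := hmf.integrableOn_isCompact isCompact_Icc
    have hcont : ContinuousOn (fun r : ℝ => (r ^ (1 + α))⁻¹) (Icc c d) := by
      apply ContinuousOn.inv₀
      · exact continuousOn_id.rpow_const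
          (fun x hx => Or.inl (ne_of_gt (lt_of_lt_of_le hc hx.1)))
      · intro x hx
        exact ne_of_gt (Real.rpow_pos_of_pos (lt_of_lt_of_le hc hx.1) _)
    simpa [div_eq_mul_inv] using hif.mul_continuousOn hcont isCompact_Icc
  -- per-term bound
  have hterm : ∀ i : ℕ, f (δ ^ (i+1)) / μ ^ (i+2) ≤
      C * ∫ r in (δ^(i+1))..(δ^i), f r / r ^ (1+α) := by
    intro i
    have hab : δ^(i+1) ≤ δ^i := pow_le_pow_of_le_one hδ0.le hδ1.le (by omega)
    have hfa0 : 0 ≤ f (δ^(i+1)) := hnonneg _ (hpow_mem _)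
    have hlow : ∀ r ∈ Icc (δ^(i+1)) (δ^i),
        f (δ^(i+1)) / (δ^i:ℝ) ^ (1+α) ≤ f r / r ^ (1+α) := by
      intro r hr
      have hr0 : 0 < r := lt_of_lt_of_le (hpow_pos _) hr.1
      have hr1 : r ≤ 1 := le_trans hr.2 (hpow_le1 _)
      exact div_le_div₀ (hnonneg r ⟨hr0, hr1⟩)
        (hmono _ (hpow_mem _) r ⟨hr0, hr1⟩ hr.1)
        (Real.rpow_pos_of_pos hr0 _)
        (Real.rpow_le_rpow hr0.le hr.2 (by linarith))
    have hmain : ((δ^i : ℝ) - δ^(i+1)) * (f (δ^(i+1)) / (δ^i:ℝ)^(1+α)) ≤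
        ∫ r in (δ^(i+1))..(δ^i), f r / r^(1+α) := by
      have := intervalIntegral.integral_mono_on hab intervalIntegrable_const
        (hint _ _ (hpow_pos _) hab (hpow_le1 _)) hlow
      simpa [smul_eq_mul, mul_div_assoc] using this
    have heq : C * (((δ^i : ℝ) - δ^(i+1)) * (f (δ^(i+1)) / (δ^i:ℝ)^(1+α))) =
        f (δ^(i+1)) / μ^(i+2) := by
      have hμpow : (μ:ℝ)^(i+2) = δ ^ (α * (i+2) : ℝ) := by
        rw [hμ, ← Real.rpow_natCast (δ^α) (i+2), ← Real.rpow_mul hδ0.le]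
        push_cast; ring_nf
      have hd1 : (δ^i : ℝ) = δ ^ (i : ℝ) := (Real.rpow_natCast δ i).symm
      have hb : ((δ^i : ℝ))^(1+α) = δ ^ ((i:ℝ) * (1+α)) := by
        rw [hd1, ← Real.rpow_mul hδ0.le]
      have e1 : (δ^i:ℝ) - δ^(i+1) = δ^((i:ℝ)) * (1 - δ) := by
        rw [pow_succ, hd1]; ring
      have e2 : δ ^ ((i:ℝ)) * (δ ^ ((i:ℝ)*(1+α)))⁻¹ * (δ^(2*α))⁻¹ =
          (δ ^ (α*((i:ℝ)+2)))⁻¹ := by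
        rw [← Real.rpow_neg hδ0.le, ← Real.rpow_neg hδ0.le, ← Real.rpow_neg hδ0.le,
            ← Real.rpow_add hδ0, ← Real.rpow_add hδ0]
        congr 1; ring
      have h1δ : (1 - δ : ℝ) ≠ 0 := by linarith
      have hz : (δ ^ (2*α) : ℝ) ≠ 0 := ne_of_gt (Real.rpow_pos_of_pos hδ0 _)
      rw [hμpow, hb, e1, hC, div_eq_mul_inv (f (δ^(i+1))) (δ ^ (α*((i:ℝ)+2))), ← e2]
      field_simp
    calc f (δ^(i+1)) / μ^(i+2)
        = C * (((δ^i : ℝ) - δ^(i+1)) * (f (δ^(i+1)) / (δ^i:ℝ)^(1+α))) := heq.symm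
      _ ≤ C * ∫ r in (δ^(i+1))..(δ^i), f r / r^(1+α) :=
          mul_le_mul_of_nonneg_left hmain hC0
  -- main claim by induction
  have claim : ∀ k : ℕ, ∑ i ∈ Finset.Icc 1 (k+1), f (δ^i)/μ^(i+1) ≤
      C * ∫ r in (δ^(k+1))..1, f r / r^(1+α) := by
    intro k
    induction k with
    | zero => simpa using hterm 0
    | succ n ih =>
      have hnotmem : (n+2) ∉ Finset.Icc 1 (n+1) := by simp
      have hI : insert (n+2) (Finset.Icc 1 (n+1)) = Finset.Icc 1 (n+2) :=
        Finset.insert_Icc_right_eq_Icc_add_one (by omega)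
      rw [show n+1+1 = n+2 from rfl, ← hI,
          Finset.sum_insert hnotmem]
      have hadd : (∫ r in (δ^(n+2))..(δ^(n+1)), f r / r^(1+α)) +
          (∫ r in (δ^(n+1))..1, f r / r^(1+α)) = ∫ r in (δ^(n+2))..1, f r / r^(1+α) := by
        rw [show (1:ℝ) = δ^0 by simp]
        exact intervalIntegral.integral_add_adjacent_intervals
          (hint _ _ (hpow_pos _) (pow_le_pow_of_le_one hδ0.le hδ1.le (by omega)) (by simpa using hpow_le1 (n+1)))
          (hint _ _ (hpow_pos _) (by simpa using hpow_le1 (n+1)) (by simp))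
      calc f (δ^(n+2)) / μ^(n+2+1) + ∑ i ∈ Finset.Icc 1 (n+1), f (δ^i)/μ^(i+1)
          ≤ C * (∫ r in (δ^(n+2))..(δ^(n+1)), f r / r^(1+α)) +
            C * ∫ r in (δ^(n+1))..1, f r / r^(1+α) := add_le_add (hterm (n+1)) ih
        _ = C * ((∫ r in (δ^(n+2))..(δ^(n+1)), f r / r^(1+α)) +
            ∫ r in (δ^(n+1))..1, f r / r^(1+α)) := by ring
        _ = C * ∫ r in (δ^(n+2))..1, f r / r^(1+α) := by rw [hadd]
  -- finish
  have hk2 : k + 3 - 2 = k + 1 := rfl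
  have hk1 : k + 3 - 1 = k + 2 := rfl
  rw [hk2, hk1]
  have hnn : (0:ℝ) ≤ ∫ r in (δ^(k+2))..(δ^(k+1)), f r / r^(1+α) := by
    apply intervalIntegral.integral_nonneg
      (pow_le_pow_of_le_one hδ0.le hδ1.le (by omega))
    intro r hr
    have hr0 : 0 < r := lt_of_lt_of_le (hpow_pos _) hr.1
    have hr1 : r ≤ 1 := le_trans hr.2 (hpow_le1 _)
    exact div_nonneg (hnonneg r ⟨hr0, hr1⟩) (Real.rpow_pos_of_pos hr0 _).le
  have hadd2 : (∫ r in (δ^(k+2))..(δ^(k+1)), f r / r^(1+α)) +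
      (∫ r in (δ^(k+1))..1, f r / r^(1+α)) = ∫ r in (δ^(k+2))..1, f r / r^(1+α) := by
    rw [show (1:ℝ) = δ^0 by simp]
    exact intervalIntegral.integral_add_adjacent_intervals
      (hint _ _ (hpow_pos _) (pow_le_pow_of_le_one hδ0.le hδ1.le (by omega)) (by simpa using hpow_le1 (k+1)))
      (hint _ _ (hpow_pos _) (by simpa using hpow_le1 (k+1)) (by simp))
  have hIcc : (∫ r in Icc (δ^(k+2)) 1, f r / r^(1+α)) =
      ∫ r in (δ^(k+2))..1, f r / r^(1+α) := by
    rw [intervalIntegral.integral_of_le (hpow_le1 _), integral_Icc_eq_integral_Ioc]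
  calc ∑ i ∈ Finset.Icc 1 (k+1), f (δ^i)/μ^(i+1)
      ≤ C * ∫ r in (δ^(k+1))..1, f r / r^(1+α) := claim k
    _ ≤ C * ∫ r in (δ^(k+2))..1, f r / r^(1+α) := by
        apply mul_le_mul_of_nonneg_left _ hC0
        linarith [hadd2]
    _ = C * ∫ r in Icc (δ^(k+2)) 1, f r / r^(1+α) := by rw [hIcc]
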